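/- In a discounted MDP, for any two policies with π ≺ π', there exists a state s ∈ S^π such that π(s) ≠ π'(s) and (s, π(s)) ∉ T^{π'}. -/

import Mathlib

namespace MDPaux

variable {n : ℕ}

def Stoch (M : Matrix (Fin n) (Fin n) ℝ) : Prop :=
  (∀ s t, 0 ≤ M s t) ∧ ∀ s, ∑ t, M s t = 1

lemma Stoch.pow {M : Matrix (Fin n) (Fin n) ℝ} (h : Stoch M) (i : ℕ) : Stoch (M ^ i) := by
  induction i with
  | zero =>
    refine ⟨fun s t => ?_, fun s => ?_⟩
    · simp only [pow_zero, Matrix.one_apply]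
      split <;> norm_num
    · simp [pow_zero, Matrix.one_apply, Finset.sum_ite_eq' Finset.univ s (fun _ => (1:ℝ))]
  | succ i ih =>
    refine ⟨fun s t => ?_, fun s => ?_⟩
    · rw [pow_succ, Matrix.mul_apply]
      exact Finset.sum_nonneg fun u _ => mul_nonneg (ih.1 s u) (h.1 u t)
    · rw [pow_succ]
      simp only [Matrix.mul_apply]
      rw [Finset.sum_comm]
      simp_rw [← Finset.mul_sum, h.2, mul_one]
      exact ih.2 s

lemma abs_mulVec_le {M : Matrix (Fin n) (Fin n) ℝ} (hM : Stoch M) (x : Fin n → ℝ) (s : Fin n) :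
    |M.mulVec x s| ≤ ‖x‖ := by
  have h1 : |M.mulVec x s| ≤ ∑ t, |M s t * x t| := by
    simpa [Matrix.mulVec, dotProduct] using
      Finset.abs_sum_le_sum_abs (fun t => M s t * x t) Finset.univ
  refine h1.trans ?_
  have h2 : ∀ t : Fin n, |M s t * x t| ≤ M s t * ‖x‖ := fun t => by
    rw [abs_mul, abs_of_nonneg (hM.1 s t)]
    exact mul_le_mul_of_nonneg_left (by simpa using norm_le_pi_norm x t) (hM.1 s t)
  calc ∑ t, |M s t * x t| ≤ ∑ t, M s t * ‖x‖ := Finset.sum_le_sum fun t _ => h2 t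
    _ = ‖x‖ := by rw [← Finset.sum_mul, hM.2 s, one_mul]

lemma norm_mulVec_le {M : Matrix (Fin n) (Fin n) ℝ} (hM : Stoch M) (x : Fin n → ℝ) :
    ‖M.mulVec x‖ ≤ ‖x‖ := by
  rw [pi_norm_le_iff_of_nonneg (norm_nonneg x)]
  intro s
  simpa [Real.norm_eq_abs] using abs_mulVec_le hM x s

variable {γ : ℝ}

lemma summable_series (hγ0 : 0 ≤ γ) (hγ1 : γ < 1) {M : Matrix (Fin n) (Fin n) ℝ}
    (hM : Stoch M) (w : Fin n → ℝ) :
    Summable fun i : ℕ => γ ^ i • (M ^ i).mulVec w := by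
  refine Summable.of_norm_bounded (g := fun i => ‖w‖ * γ ^ i)
    ((summable_geometric_of_lt_one hγ0 hγ1).mul_left _) fun i => ?_
  rw [norm_smul, Real.norm_eq_abs, abs_pow, abs_of_nonneg hγ0, mul_comm]
  exact mul_le_mul_of_nonneg_right (norm_mulVec_le (hM.pow i) w) (pow_nonneg hγ0 i)

lemma series_fixed (hγ0 : 0 ≤ γ) (hγ1 : γ < 1) {M : Matrix (Fin n) (Fin n) ℝ}
    (hM : Stoch M) (w : Fin n → ℝ) :
    (∑' i : ℕ, γ ^ i • (M ^ i).mulVec w)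
      = w + γ • M.mulVec (∑' i : ℕ, γ ^ i • (M ^ i).mulVec w) := by
  have hsum := summable_series hγ0 hγ1 hM w
  set L : (Fin n → ℝ) →L[ℝ] (Fin n → ℝ) :=
    LinearMap.toContinuousLinearMap (γ • M.mulVecLin) with hL
  have hLx : ∀ x, L x = γ • M.mulVec x := fun x => rfl
  nth_rewrite 1 [Summable.tsum_eq_zero_add hsum]
  congr 1
  · simp
  · have key : ∀ i : ℕ, γ ^ (i + 1) • (M ^ (i + 1)).mulVec w
        = L (γ ^ i • (M ^ i).mulVec w) := by
      intro i
      rw [hLx, pow_succ' M, ← Matrix.mulVec_mulVec, Matrix.mulVec_smul, smul_smul, ← pow_succ']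
    simp_rw [key]
    rw [← L.map_tsum hsum, hLx]

lemma fixed_unique (hγ0 : 0 ≤ γ) (hγ1 : γ < 1) {M : Matrix (Fin n) (Fin n) ℝ}
    (hM : Stoch M) (w x y : Fin n → ℝ)
    (hx : x = w + γ • M.mulVec x) (hy : y = w + γ • M.mulVec y) : x = y := by
  have h : x - y = γ • M.mulVec (x - y) := by
    rw [Matrix.mulVec_sub, smul_sub]
    nth_rewrite 1 [hx, hy]
    abel
  have hn : ‖x - y‖ ≤ γ * ‖x - y‖ := by
    calc ‖x - y‖ = ‖γ • M.mulVec (x - y)‖ := by rw [← h]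
      _ = γ * ‖M.mulVec (x - y)‖ := by
          rw [norm_smul, Real.norm_eq_abs, abs_of_nonneg hγ0]
      _ ≤ γ * ‖x - y‖ := mul_le_mul_of_nonneg_left (norm_mulVec_le hM _) hγ0
  have : ‖x - y‖ = 0 := by nlinarith [norm_nonneg (x - y)]
  exact sub_eq_zero.mp (norm_eq_zero.mp this)

lemma series_pointwise (hγ0 : 0 ≤ γ) (hγ1 : γ < 1) {M : Matrix (Fin n) (Fin n) ℝ}
    (hM : Stoch M) (w : Fin n → ℝ) (s : Fin n) :
    (∑' i : ℕ, γ ^ i • (M ^ i).mulVec w) s = ∑' i : ℕ, γ ^ i * (M ^ i).mulVec w s := by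
  rw [tsum_apply (summable_series hγ0 hγ1 hM w)]
  rfl

lemma summable_pointwise (hγ0 : 0 ≤ γ) (hγ1 : γ < 1) {M : Matrix (Fin n) (Fin n) ℝ}
    (hM : Stoch M) (w : Fin n → ℝ) (s : Fin n) :
    Summable fun i : ℕ => γ ^ i * (M ^ i).mulVec w s := by
  have := (summable_series hγ0 hγ1 hM w).map (Pi.evalAddMonoidHom (fun _ : Fin n => ℝ) s)
    (continuous_apply s)
  exact this

lemma mulVec_nonneg {M : Matrix (Fin n) (Fin n) ℝ} (hM0 : ∀ s t, 0 ≤ M s t) {x : Fin n → ℝ}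
    (hx : ∀ t, 0 ≤ x t) (s : Fin n) : 0 ≤ M.mulVec x s := by
  simpa [Matrix.mulVec, dotProduct] using
    Finset.sum_nonneg fun t (_ : t ∈ Finset.univ) => mul_nonneg (hM0 s t) (hx t)

lemma mulVec_nonpos {M : Matrix (Fin n) (Fin n) ℝ} (hM0 : ∀ s t, 0 ≤ M s t) {x : Fin n → ℝ}
    (hx : ∀ t, x t ≤ 0) (s : Fin n) : M.mulVec x s ≤ 0 := by
  simpa [Matrix.mulVec, dotProduct] using
    Finset.sum_nonpos fun t (_ : t ∈ Finset.univ) => mul_nonpos_of_nonneg_of_nonpos (hM0 s t) (hx t)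

lemma series_ge (hγ0 : 0 ≤ γ) (hγ1 : γ < 1) {M : Matrix (Fin n) (Fin n) ℝ}
    (hM : Stoch M) {w : Fin n → ℝ} (hw : ∀ t, 0 ≤ w t) (s : Fin n) :
    w s ≤ (∑' i : ℕ, γ ^ i • (M ^ i).mulVec w) s := by
  rw [series_pointwise hγ0 hγ1 hM w s]
  have h0 : γ ^ 0 * (M ^ 0).mulVec w s = w s := by simp
  calc w s = γ ^ 0 * (M ^ 0).mulVec w s := h0.symm
    _ ≤ ∑' i : ℕ, γ ^ i * (M ^ i).mulVec w s :=
      Summable.le_tsum (summable_pointwise hγ0 hγ1 hM w s) 0 fun i _ =>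
        mul_nonneg (pow_nonneg hγ0 i) (mulVec_nonneg (hM.pow i).1 hw s)

lemma series_nonpos (hγ0 : 0 ≤ γ) (hγ1 : γ < 1) {M : Matrix (Fin n) (Fin n) ℝ}
    (hM : Stoch M) {w : Fin n → ℝ} (hw : ∀ t, w t ≤ 0) (s : Fin n) :
    (∑' i : ℕ, γ ^ i • (M ^ i).mulVec w) s ≤ 0 := by
  rw [series_pointwise hγ0 hγ1 hM w s]
  exact tsum_nonpos fun i =>
    mul_nonpos_of_nonneg_of_nonpos (pow_nonneg hγ0 i) (mulVec_nonpos (hM.pow i).1 hw s)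

end MDPaux


/-- The transition matrix induced by a policy. -/
noncomputable def polMatrix {n k : ℕ} (P : Fin n → Fin k → Fin n → ℝ)
    (π : Fin n → Fin k) : Matrix (Fin n) (Fin n) ℝ :=
  Matrix.of fun s s' => P s (π s) s'

/-- The reward vector induced by a policy. -/
noncomputable def polReward {n k : ℕ} (r : Fin n → Fin k → ℝ)
    (π : Fin n → Fin k) : Fin n → ℝ :=
  fun s => r s (π s)

/-- The value vector of a policy: `v^π = ∑_{i=0}^∞ γ^i (P^π)^i r^π`. -/
noncomputable def polValue {n k : ℕ} (P : Fin n → Fin k → Fin n → ℝ)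
    (r : Fin n → Fin k → ℝ) (γ : ℝ) (π : Fin n → Fin k) : Fin n → ℝ :=
  ∑' i : ℕ, γ ^ i • (polMatrix P π ^ i).mulVec (polReward r π)

/-- `π ⪯ π'` : the policy `π'` dominates `π`. -/
def Dominates {n k : ℕ} (P : Fin n → Fin k → Fin n → ℝ) (r : Fin n → Fin k → ℝ)
    (γ : ℝ) (π π' : Fin n → Fin k) : Prop :=
  ∀ s, polValue P r γ π s ≤ polValue P r γ π' s

/-- `π ≺ π'` : the policy `π'` strictly dominates `π`. -/
def StrictDominates {n k : ℕ} (P : Fin n → Fin k → Fin n → ℝ) (r : Fin n → Fin k → ℝ)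
    (γ : ℝ) (π π' : Fin n → Fin k) : Prop :=
  Dominates P r γ π π' ∧ ∃ s, polValue P r γ π s < polValue P r γ π' s

/-- A set of state-action pairs is well-defined if it contains each state at most once. -/
def WellDefined {n k : ℕ} (U : Set (Fin n × Fin k)) : Prop :=
  ∀ s a a', (s, a) ∈ U → (s, a') ∈ U → a = a'

-- `π ⊕ U` : the policy obtained from `π` by switching the action at `s` to `a`
-- for each `(s, a) ∈ U` (intended for well-defined `U`).
open Classical in
noncomputable def switch {n k : ℕ} (π : Fin n → Fin k) (U : Set (Fin n × Fin k)) :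
    Fin n → Fin k :=
  fun s => if h : ∃ a, (s, a) ∈ U then h.choose else π s

/-- The improvement set `T^π = {(s,a) : π ⊕ {(s,a)} ≻ π}`. -/
def improvementSet {n k : ℕ} (P : Fin n → Fin k → Fin n → ℝ) (r : Fin n → Fin k → ℝ)
    (γ : ℝ) (π : Fin n → Fin k) : Set (Fin n × Fin k) :=
  {p | StrictDominates P r γ π (Function.update π p.1 p.2)}

/-- The set of improvement states `S^π`. -/
def improvementStates {n k : ℕ} (P : Fin n → Fin k → Fin n → ℝ) (r : Fin n → Fin k → ℝ)
    (γ : ℝ) (π : Fin n → Fin k) : Set (Fin n) :=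
  {s | ∃ a, (s, a) ∈ improvementSet P r γ π}

section MDP

open MDPaux

variable {n k : ℕ} (P : Fin n → Fin k → Fin n → ℝ) (r : Fin n → Fin k → ℝ) {γ : ℝ}

lemma polMatrix_stoch (hP0 : ∀ s a s', 0 ≤ P s a s') (hP1 : ∀ s a, ∑ s', P s a s' = 1)
    (π : Fin n → Fin k) : Stoch (polMatrix P π) :=
  ⟨fun s t => hP0 s (π s) t, fun s => hP1 s (π s)⟩

lemma bellman_vec (hP0 : ∀ s a s', 0 ≤ P s a s') (hP1 : ∀ s a, ∑ s', P s a s' = 1)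
    (hγ0 : 0 ≤ γ) (hγ1 : γ < 1) (π : Fin n → Fin k) :
    polValue P r γ π = polReward r π + γ • (polMatrix P π).mulVec (polValue P r γ π) :=
  series_fixed hγ0 hγ1 (polMatrix_stoch P hP0 hP1 π) (polReward r π)

lemma bellman (hP0 : ∀ s a s', 0 ≤ P s a s') (hP1 : ∀ s a, ∑ s', P s a s' = 1)
    (hγ0 : 0 ≤ γ) (hγ1 : γ < 1) (π : Fin n → Fin k) (s : Fin n) :
    polValue P r γ π s = r s (π s) + γ * ∑ t, P s (π s) t * polValue P r γ π t := by
  conv_lhs => rw [bellman_vec P r hP0 hP1 hγ0 hγ1 π]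
  simp [polReward, polMatrix, Matrix.mulVec, dotProduct]

/-- The advantage of action `a` at state `s` relative to policy `π`. -/
noncomputable def adv (γ : ℝ) (π : Fin n → Fin k) (s : Fin n) (a : Fin k) : ℝ :=
  r s a + γ * ∑ t, P s a t * polValue P r γ π t - polValue P r γ π s

lemma adv_self (hP0 : ∀ s a s', 0 ≤ P s a s') (hP1 : ∀ s a, ∑ s', P s a s' = 1)
    (hγ0 : 0 ≤ γ) (hγ1 : γ < 1) (π : Fin n → Fin k) (s : Fin n) :
    adv P r γ π s (π s) = 0 := by
  have := bellman P r hP0 hP1 hγ0 hγ1 π s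
  unfold adv
  linarith

lemma value_diff (hP0 : ∀ s a s', 0 ≤ P s a s') (hP1 : ∀ s a, ∑ s', P s a s' = 1)
    (hγ0 : 0 ≤ γ) (hγ1 : γ < 1) (π τ : Fin n → Fin k) :
    polValue P r γ τ - polValue P r γ π =
      ∑' i : ℕ, γ ^ i • ((polMatrix P τ) ^ i).mulVec
        (polReward r τ + γ • (polMatrix P τ).mulVec (polValue P r γ π) - polValue P r γ π) := by
  set M := polMatrix P τ with hM_def
  set w := polReward r τ + γ • M.mulVec (polValue P r γ π) - polValue P r γ π with hw
  have hM : Stoch M := polMatrix_stoch P hP0 hP1 τ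
  refine fixed_unique hγ0 hγ1 hM w _ _ ?_ (series_fixed hγ0 hγ1 hM w)
  have hb : polValue P r γ τ = polReward r τ + γ • M.mulVec (polValue P r γ τ) :=
    bellman_vec P r hP0 hP1 hγ0 hγ1 τ
  rw [hw, Matrix.mulVec_sub, smul_sub]
  nth_rewrite 1 [hb]
  abel

lemma mem_improvementSet_iff (hP0 : ∀ s a s', 0 ≤ P s a s') (hP1 : ∀ s a, ∑ s', P s a s' = 1)
    (hγ0 : 0 ≤ γ) (hγ1 : γ < 1) (π : Fin n → Fin k) (s : Fin n) (a : Fin k) :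
    (s, a) ∈ improvementSet P r γ π ↔ 0 < adv P r γ π s a := by
  set σ := Function.update π s a with hσ
  set w := polReward r σ + γ • (polMatrix P σ).mulVec (polValue P r γ π) - polValue P r γ π
    with hw
  have hws : w s = adv P r γ π s a := by
    simp only [hw, Pi.sub_apply, Pi.add_apply, Pi.smul_apply, smul_eq_mul, adv,
      polReward, polMatrix, Matrix.mulVec, dotProduct, Matrix.of_apply]
    rw [hσ]
    simp [Function.update_self]
  have hwt : ∀ t, t ≠ s → w t = 0 := by
    intro t ht
    have h1 : σ t = π t := Function.update_of_ne ht a π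
    have hb := bellman P r hP0 hP1 hγ0 hγ1 π t
    simp only [hw, Pi.sub_apply, Pi.add_apply, Pi.smul_apply, smul_eq_mul,
      polReward, polMatrix, Matrix.mulVec, dotProduct, Matrix.of_apply, h1]
    linarith
  have hM : Stoch (polMatrix P σ) := polMatrix_stoch P hP0 hP1 σ
  have hdiff := value_diff P r hP0 hP1 hγ0 hγ1 π σ
  rw [← hw] at hdiff
  simp only [improvementSet, Set.mem_setOf_eq, ← hσ]
  constructor
  · rintro ⟨hdom, t, hlt⟩
    by_contra hle
    push_neg at hle
    have hwle : ∀ u, w u ≤ 0 := by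
      intro u
      by_cases hu : u = s
      · rw [hu, hws]; exact hle
      · rw [hwt u hu]
    have hs := series_nonpos hγ0 hγ1 hM hwle t
    have h2 := congrFun hdiff t
    simp only [Pi.sub_apply] at h2
    linarith
  · intro h
    have hwge : ∀ u, 0 ≤ w u := by
      intro u
      by_cases hu : u = s
      · rw [hu, hws]; exact h.le
      · rw [hwt u hu]
    constructor
    · intro u
      have hs := series_ge hγ0 hγ1 hM hwge u
      have h2 := congrFun hdiff u
      simp only [Pi.sub_apply] at h2
      linarith [hwge u]
    · refine ⟨s, ?_⟩
      have hs := series_ge hγ0 hγ1 hM hwge s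
      have h2 := congrFun hdiff s
      simp only [Pi.sub_apply] at h2
      rw [hws] at hs
      linarith

end MDP

theorem noninclusion_property (n k : ℕ) (hn : 1 ≤ n) (hk : 1 ≤ k)
    (P : Fin n → Fin k → Fin n → ℝ) (r : Fin n → Fin k → ℝ) (γ : ℝ)
    (hP0 : ∀ s a s', 0 ≤ P s a s') (hP1 : ∀ s a, ∑ s', P s a s' = 1)
    (hγ0 : 0 ≤ γ) (hγ1 : γ < 1)
    (π π' : Fin n → Fin k) (hlt : StrictDominates P r γ π π') :
    ∃ s ∈ improvementStates P r γ π,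
      π s ≠ π' s ∧ (s, π s) ∉ improvementSet P r γ π' := by
  obtain ⟨hdom, t0, ht0⟩ := hlt
  set d : Fin n → ℝ := fun t => polValue P r γ π' t - polValue P r γ π t with hd_def
  obtain ⟨s, -, hmax⟩ := Finset.exists_max_image Finset.univ d ⟨t0, Finset.mem_univ t0⟩
  have hds : 0 < d s := lt_of_lt_of_le (by simp [hd_def]; linarith) (hmax t0 (Finset.mem_univ t0))
  have hbound : ∀ b : Fin k, ∑ t, P s b t * d t ≤ d s := by
    intro b
    calc ∑ t, P s b t * d t ≤ ∑ t, P s b t * d s :=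
          Finset.sum_le_sum fun t _ =>
            mul_le_mul_of_nonneg_left (hmax t (Finset.mem_univ t)) (hP0 s b t)
      _ = d s := by rw [← Finset.sum_mul, hP1 s b, one_mul]
  have hsplit : ∀ b : Fin k, ∑ t, P s b t * d t
      = (∑ t, P s b t * polValue P r γ π' t) - ∑ t, P s b t * polValue P r γ π t := by
    intro b
    simp [hd_def, mul_sub, Finset.sum_sub_distrib]
  have hadv1 : adv P r γ π s (π' s) = d s - γ * ∑ t, P s (π' s) t * d t := by
    have hb := bellman P r hP0 hP1 hγ0 hγ1 π' s
    simp only [adv, hd_def, hsplit (π' s)]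
    rw [hb]
    simp only [mul_sub, Finset.sum_sub_distrib]
    ring
  have hadv2 : adv P r γ π' s (π s) = -(d s) + γ * ∑ t, P s (π s) t * d t := by
    have hb := bellman P r hP0 hP1 hγ0 hγ1 π s
    simp only [adv, hd_def, hsplit (π s)]
    rw [hb]
    simp only [mul_sub, Finset.sum_sub_distrib]
    ring
  have hpos : 0 < adv P r γ π s (π' s) := by
    rw [hadv1]
    have h1 := mul_le_mul_of_nonneg_left (hbound (π' s)) hγ0
    nlinarith
  have hneg : adv P r γ π' s (π s) < 0 := by
    rw [hadv2]
    have h1 := mul_le_mul_of_nonneg_left (hbound (π s)) hγ0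
    nlinarith
  refine ⟨s, ⟨π' s, (mem_improvementSet_iff P r hP0 hP1 hγ0 hγ1 π s (π' s)).mpr hpos⟩, ?_, ?_⟩
  · intro heq
    have h0 := adv_self P r hP0 hP1 hγ0 hγ1 π' s
    rw [heq] at hneg
    linarith
  · intro hmem
    have := (mem_improvementSet_iff P r hP0 hP1 hγ0 hγ1 π' s (π s)).mp hmem
    linarith
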